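/- Let f : ℝ² → ℝ be a differentiable function with f(z,λ) ≥ 0 for all (z,λ) ∈ ℝ², and define F : ℝ⁴ → ℝ² by F(x,y,z,λ) = (x² − y + y²·f(z,λ), λ). Then F is a submersion at every point of F⁻¹((0,∞)×ℝ); that is, for every p = (x,y,z,λ) ∈ ℝ⁴ with x² − y + y²·f(z,λ) > 0, the (Fréchet) derivative of F at p is a surjective linear map ℝ⁴ → ℝ². -/

import Mathlib

/-- For differentiable `f : ℝ² → ℝ` with `f ≥ 0`, the map
`F(x,y,z,λ) = (x² − y + y²·f(z,λ), λ)` is a submersion at every point of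
`F⁻¹((0,∞)×ℝ)`, i.e. its Fréchet derivative is surjective there. -/
theorem stmt_0 (f : ℝ × ℝ → ℝ) (hf : Differentiable ℝ f)
    (hfpos : ∀ p : ℝ × ℝ, 0 ≤ f p)
    (F : ℝ × ℝ × ℝ × ℝ → ℝ × ℝ)
    (hF : ∀ x y z l : ℝ, F (x, y, z, l) = (x ^ 2 - y + y ^ 2 * f (z, l), l)) :
    ∀ p : ℝ × ℝ × ℝ × ℝ, (F p).1 > 0 →
      Function.Surjective (fderiv ℝ F p) := by
  have hFeq : F = fun q : ℝ × ℝ × ℝ × ℝ =>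
      (q.1 * q.1 - q.2.1 + q.2.1 * q.2.1 * f q.2.2, q.2.2.2) := by
    funext q
    obtain ⟨a, b, c, d⟩ := q
    rw [hF a b c d]
    refine Prod.ext ?_ rfl
    ring
  rintro ⟨x, y, z, l⟩ hp
  rw [hF x y z l] at hp
  simp only at hp
  set p : ℝ × ℝ × ℝ × ℝ := (x, y, z, l) with hpdef
  have hDf : HasFDerivAt f (fderiv ℝ f (z, l)) (z, l) := (hf _).hasFDerivAt
  set Df := fderiv ℝ f (z, l) with hDfdef
  have hy : HasFDerivAt (fun q : ℝ × ℝ × ℝ × ℝ => q.2.1)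
      ((ContinuousLinearMap.fst ℝ ℝ (ℝ × ℝ)).comp
        (ContinuousLinearMap.snd ℝ ℝ (ℝ × ℝ × ℝ))) p :=
    hasFDerivAt_fst.comp p hasFDerivAt_snd
  have hzl : HasFDerivAt (fun q : ℝ × ℝ × ℝ × ℝ => q.2.2)
      ((ContinuousLinearMap.snd ℝ ℝ (ℝ × ℝ)).comp
        (ContinuousLinearMap.snd ℝ ℝ (ℝ × ℝ × ℝ))) p :=
    hasFDerivAt_snd.comp p hasFDerivAt_snd
  have hl : HasFDerivAt (fun q : ℝ × ℝ × ℝ × ℝ => q.2.2.2)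
      ((ContinuousLinearMap.snd ℝ ℝ ℝ).comp
        ((ContinuousLinearMap.snd ℝ ℝ (ℝ × ℝ)).comp
          (ContinuousLinearMap.snd ℝ ℝ (ℝ × ℝ × ℝ)))) p :=
    hasFDerivAt_snd.comp p hzl
  have hfp : HasFDerivAt (fun q : ℝ × ℝ × ℝ × ℝ => f q.2.2)
      (Df.comp ((ContinuousLinearMap.snd ℝ ℝ (ℝ × ℝ)).comp
        (ContinuousLinearMap.snd ℝ ℝ (ℝ × ℝ × ℝ)))) p :=
    hDf.comp p hzl
  have H := HasFDerivAt.prodMk (((hasFDerivAt_fst.mul hasFDerivAt_fst).sub hy).add ((hy.mul hy).mul hfp)) hl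
  simp only [Pi.add_apply, Pi.sub_apply, Pi.mul_apply] at H
  rw [← hFeq] at H
  rw [H.fderiv]
  rintro ⟨a, b⟩
  set c : ℝ := Df (0, b) with hc
  by_cases hx : x ≠ 0
  · refine ⟨((a - y ^ 2 * c) / (2 * x), 0, 0, b), ?_⟩
    simp only [ContinuousLinearMap.prod_apply, ContinuousLinearMap.add_apply,
      ContinuousLinearMap.sub_apply, ContinuousLinearMap.smul_apply,
      ContinuousLinearMap.comp_apply, ContinuousLinearMap.coe_fst',
      ContinuousLinearMap.coe_snd', smul_eq_mul]
    refine Prod.ext ?_ rfl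
    simp only [← hc]
    field_simp
    ring
  · push_neg at hx
    subst hx
    have hA : (-1 : ℝ) + 2 * y * f (z, l) ≠ 0 := by
      intro h0
      nlinarith [hfpos (z, l), hp, sq_nonneg y]
    refine ⟨(0, (a - y ^ 2 * c) / ((-1 : ℝ) + 2 * y * f (z, l)), 0, b), ?_⟩
    simp only [ContinuousLinearMap.prod_apply, ContinuousLinearMap.add_apply,
      ContinuousLinearMap.sub_apply, ContinuousLinearMap.smul_apply,
      ContinuousLinearMap.comp_apply, ContinuousLinearMap.coe_fst',
      ContinuousLinearMap.coe_snd', smul_eq_mul]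
    refine Prod.ext ?_ rfl
    simp only [← hc]
    simp only [hpdef]
    linear_combination (div_mul_cancel₀ (a - y ^ 2 * c) hA)
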